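/- Let u ∈ ℝ³, ξ > 0, n a unit vector in ℝ³ with ξ > |u·n|. Then the 4×4 Lorentz-gauge flux Jacobian N(n) = [[n²u²+n³u³, -n¹u², -n¹u³, n¹],[-n²u¹, n¹u¹+n³u³, -n²u³, n²],[-n³u¹, -n³u², n¹u¹+n²u², n³],[n¹ξ², n²ξ², n³ξ², 0]] is diagonalizable over ℝ, i.e., the augmented system is (strongly) hyperbolic. -/

import Mathlib

lemma aux_diag (n0 n1 n2 u0 u1 u2 ξ v10 v11 v12 v20 v21 v22 : ℝ)
    (hξ : ξ ≠ 0)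
    (hn : n0^2 + n1^2 + n2^2 = 1)
    (hw1 : ξ^2*(n0*v10 + n1*v11 + n2*v12)
        = (u0*n0 + u1*n1 + u2*n2)*(u0*v10 + u1*v11 + u2*v12))
    (hw2 : ξ^2*(n0*v20 + n1*v21 + n2*v22)
        = (u0*n0 + u1*n1 + u2*n2)*(u0*v20 + u1*v21 + u2*v22))
    (hdet : n0*(v11*v22 - v12*v21) - n1*(v10*v22 - v12*v20) + n2*(v10*v21 - v11*v20) ≠ 0) :
    ∃ P : Matrix (Fin 4) (Fin 4) ℝ, IsUnit P.det ∧
      (P⁻¹ *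
        (!![n1 * u1 + n2 * u2, -(n0 * u1), -(n0 * u2), n0;
            -(n1 * u0), n0 * u0 + n2 * u2, -(n1 * u2), n1;
            -(n2 * u0), -(n2 * u1), n0 * u0 + n1 * u1, n2;
            n0 * ξ^2, n1 * ξ^2, n2 * ξ^2, 0]) * P).IsDiag := by
  set P : Matrix (Fin 4) (Fin 4) ℝ :=
    !![n0, n0, v10, v20;
       n1, n1, v11, v21;
       n2, n2, v12, v22;
       ξ, -ξ, u0*v10+u1*v11+u2*v12, u0*v20+u1*v21+u2*v22] with hP
  have hdetP : P.det = -2*ξ*(n0*(v11*v22 - v12*v21) - n1*(v10*v22 - v12*v20)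
      + n2*(v10*v21 - v11*v20)) := by
    rw [hP]
    simp [Matrix.det_succ_row_zero, Fin.sum_univ_succ, Fin.succAbove, Fin.castSucc, Fin.castAdd, Fin.castLE]
    ring
  have hunit : IsUnit P.det := by
    rw [isUnit_iff_ne_zero, hdetP]
    exact mul_ne_zero (mul_ne_zero (by norm_num) hξ) hdet
  refine ⟨P, hunit, ?_⟩
  have hD : (!![n1 * u1 + n2 * u2, -(n0 * u1), -(n0 * u2), n0;
            -(n1 * u0), n0 * u0 + n2 * u2, -(n1 * u2), n1;
            -(n2 * u0), -(n2 * u1), n0 * u0 + n1 * u1, n2;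
            n0 * ξ^2, n1 * ξ^2, n2 * ξ^2, 0]) * P
      = P * Matrix.diagonal ![ξ, -ξ, u0*n0 + u1*n1 + u2*n2, u0*n0 + u1*n1 + u2*n2] := by
    ext i j
    fin_cases i <;> fin_cases j <;>
      simp [Matrix.mul_apply, Fin.sum_univ_succ, Matrix.diagonal, hP]
    all_goals first
        | ring1
        | linear_combination ξ^2 * hn
        | linear_combination hw1
        | linear_combination hw2
  rw [Matrix.mul_assoc, hD, ← Matrix.mul_assoc, Matrix.nonsing_inv_mul _ hunit, Matrix.one_mul]
  exact Matrix.isDiag_diagonal _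


/-- If `ξ > |u·n|`, the 4×4 Lorentz-gauge flux Jacobian is diagonalizable
over `ℝ`: the augmented system is strongly hyperbolic. -/
theorem lorentz_gauge_diagonalizable
    (u n : EuclideanSpace ℝ (Fin 3)) (ξ : ℝ) (hξ : 0 < ξ) (hn : ‖n‖ = 1)
    (hspeed : |u 0 * n 0 + u 1 * n 1 + u 2 * n 2| < ξ) :
    ∃ P : Matrix (Fin 4) (Fin 4) ℝ, IsUnit P.det ∧
      (P⁻¹ *
        (!![n 1 * u 1 + n 2 * u 2, -(n 0 * u 1), -(n 0 * u 2), n 0;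
            -(n 1 * u 0), n 0 * u 0 + n 2 * u 2, -(n 1 * u 2), n 1;
            -(n 2 * u 0), -(n 2 * u 1), n 0 * u 0 + n 1 * u 1, n 2;
            n 0 * ξ^2, n 1 * ξ^2, n 2 * ξ^2, 0]) * P).IsDiag := by
  have hn' : (n 0)^2 + (n 1)^2 + (n 2)^2 = 1 := by
    rw [EuclideanSpace.norm_eq, Real.sqrt_eq_one] at hn
    simpa [Fin.sum_univ_three, Real.norm_eq_abs, sq_abs] using hn
  have hξ0 : ξ ≠ 0 := ne_of_gt hξ
  have hξa : 0 < ξ^2 - (u 0 * n 0 + u 1 * n 1 + u 2 * n 2)^2 := by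
    have h1 := abs_lt.mp hspeed
    nlinarith [h1.1, h1.2]
  have hcases : (ξ^2 * n 0 - (u 0 * n 0 + u 1 * n 1 + u 2 * n 2) * u 0) ≠ 0 ∨ (ξ^2 * n 1 - (u 0 * n 0 + u 1 * n 1 + u 2 * n 2) * u 1) ≠ 0 ∨ (ξ^2 * n 2 - (u 0 * n 0 + u 1 * n 1 + u 2 * n 2) * u 2) ≠ 0 := by
    by_contra hc
    push_neg at hc
    obtain ⟨h0, h1, h2⟩ := hc
    refine (ne_of_gt hξa) ?_
    linear_combination n 0 * h0 + n 1 * h1 + n 2 * h2 - ξ^2 * hn'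
  rcases hcases with h | h | h
  · refine aux_diag (n 0) (n 1) (n 2) (u 0) (u 1) (u 2) ξ (-(ξ^2 * n 2 - (u 0 * n 0 + u 1 * n 1 + u 2 * n 2) * u 2)) 0 (ξ^2 * n 0 - (u 0 * n 0 + u 1 * n 1 + u 2 * n 2) * u 0) (ξ^2 * n 1 - (u 0 * n 0 + u 1 * n 1 + u 2 * n 2) * u 1) (-(ξ^2 * n 0 - (u 0 * n 0 + u 1 * n 1 + u 2 * n 2) * u 0)) 0 hξ0 hn' (by ring) (by ring) ?_
    have hd : n 0 * (0 * 0 - (ξ^2 * n 0 - (u 0 * n 0 + u 1 * n 1 + u 2 * n 2) * u 0) * (-(ξ^2 * n 0 - (u 0 * n 0 + u 1 * n 1 + u 2 * n 2) * u 0))) - n 1 * ((-(ξ^2 * n 2 - (u 0 * n 0 + u 1 * n 1 + u 2 * n 2) * u 2)) * 0 - (ξ^2 * n 0 - (u 0 * n 0 + u 1 * n 1 + u 2 * n 2) * u 0) * (ξ^2 * n 1 - (u 0 * n 0 + u 1 * n 1 + u 2 * n 2) * u 1)) + n 2 * ((-(ξ^2 * n 2 - (u 0 * n 0 + u 1 *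 n 1 + u 2 * n 2) * u 2)) * (-(ξ^2 * n 0 - (u 0 * n 0 + u 1 * n 1 + u 2 * n 2) * u 0)) - 0 * (ξ^2 * n 1 - (u 0 * n 0 + u 1 * n 1 + u 2 * n 2) * u 1)) = (ξ^2 * n 0 - (u 0 * n 0 + u 1 * n 1 + u 2 * n 2) * u 0) * (ξ^2 - (u 0 * n 0 + u 1 * n 1 + u 2 * n 2)^2) := by
      linear_combination (ξ^2 * (ξ^2 * n 0 - (u 0 * n 0 + u 1 * n 1 + u 2 * n 2) * u 0)) * hn'
    rw [hd]
    exact mul_ne_zero h (ne_of_gt hξa)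
  · refine aux_diag (n 0) (n 1) (n 2) (u 0) (u 1) (u 2) ξ (ξ^2 * n 1 - (u 0 * n 0 + u 1 * n 1 + u 2 * n 2) * u 1) (-(ξ^2 * n 0 - (u 0 * n 0 + u 1 * n 1 + u 2 * n 2) * u 0)) 0 0 (ξ^2 * n 2 - (u 0 * n 0 + u 1 * n 1 + u 2 * n 2) * u 2) (-(ξ^2 * n 1 - (u 0 * n 0 + u 1 * n 1 + u 2 * n 2) * u 1)) hξ0 hn' (by ring) (by ring) ?_
    have hd : n 0 * ((-(ξ^2 * n 0 - (u 0 * n 0 + u 1 * n 1 + u 2 * n 2) * u 0)) * (-(ξ^2 * n 1 - (u 0 * n 0 + u 1 * n 1 + u 2 * n 2) * u 1)) - 0 * (ξ^2 * n 2 - (u 0 * n 0 + u 1 * n 1 + u 2 * n 2) * u 2)) - n 1 * ((ξ^2 * n 1 - (u 0 * n 0 + u 1 * n 1 + u 2 * n 2) * u 1) * (-(ξ^2 * n 1 - (u 0 * n 0 + u 1 * n 1 + u 2 * n 2) * u 1)) - 0 * 0) + n 2 * ((ξ^2 * n 1 - (u 0 * n 0 + u 1 * n 1 + u 2 * n 2)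 * u 1) * (ξ^2 * n 2 - (u 0 * n 0 + u 1 * n 1 + u 2 * n 2) * u 2) - (-(ξ^2 * n 0 - (u 0 * n 0 + u 1 * n 1 + u 2 * n 2) * u 0)) * 0) = (ξ^2 * n 1 - (u 0 * n 0 + u 1 * n 1 + u 2 * n 2) * u 1) * (ξ^2 - (u 0 * n 0 + u 1 * n 1 + u 2 * n 2)^2) := by
      linear_combination (ξ^2 * (ξ^2 * n 1 - (u 0 * n 0 + u 1 * n 1 + u 2 * n 2) * u 1)) * hn'
    rw [hd]
    exact mul_ne_zero h (ne_of_gt hξa)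
  · refine aux_diag (n 0) (n 1) (n 2) (u 0) (u 1) (u 2) ξ 0 (ξ^2 * n 2 - (u 0 * n 0 + u 1 * n 1 + u 2 * n 2) * u 2) (-(ξ^2 * n 1 - (u 0 * n 0 + u 1 * n 1 + u 2 * n 2) * u 1)) (-(ξ^2 * n 2 - (u 0 * n 0 + u 1 * n 1 + u 2 * n 2) * u 2)) 0 (ξ^2 * n 0 - (u 0 * n 0 + u 1 * n 1 + u 2 * n 2) * u 0) hξ0 hn' (by ring) (by ring) ?_
    have hd : n 0 * ((ξ^2 * n 2 - (u 0 * n 0 + u 1 * n 1 + u 2 * n 2) * u 2) * (ξ^2 * n 0 - (u 0 * n 0 + u 1 * n 1 + u 2 * n 2) * u 0) - (-(ξ^2 * n 1 - (u 0 * n 0 + u 1 * n 1 + u 2 * n 2) * u 1)) * 0) - n 1 * (0 * (ξ^2 * n 0 - (u 0 * n 0 + u 1 * n 1 + u 2 * n 2) * u 0) - (-(ξ^2 * n 1 - (u 0 * n 0 + u 1 * n 1 + u 2 * n 2) * u 1)) * (-(ξ^2 * n 2 - (u 0 * n 0 + u 1 * n 1 + u 2 * n 2) * u 2))) + n 2 *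 (0 * 0 - (ξ^2 * n 2 - (u 0 * n 0 + u 1 * n 1 + u 2 * n 2) * u 2) * (-(ξ^2 * n 2 - (u 0 * n 0 + u 1 * n 1 + u 2 * n 2) * u 2))) = (ξ^2 * n 2 - (u 0 * n 0 + u 1 * n 1 + u 2 * n 2) * u 2) * (ξ^2 - (u 0 * n 0 + u 1 * n 1 + u 2 * n 2)^2) := by
      linear_combination (ξ^2 * (ξ^2 * n 2 - (u 0 * n 0 + u 1 * n 1 + u 2 * n 2) * u 2)) * hn'
    rw [hd]
    exact mul_ne_zero h (ne_of_gt hξa)
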